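/- Let c > 0, L, S ∈ ℝ³ with L ≠ S, t > 0 with t·c > dist L S, and let d be a unit vector in ℝ³ with inner product ⟪d, S - L⟫ > -‖S - L‖ (i.e., the ray from L with direction d is not pointing directly away so as to never close the ellipse). Then there exists a unique s > 0 such that the point P = L + s·d satisfies dist L P + dist P S = t·c. -/

import Mathlib

theorem stmt_1 (c : ℝ) (hc : 0 < c) (L S : EuclideanSpace ℝ (Fin 3)) (hLS : L ≠ S)
    (t : ℝ) (ht : 0 < t) (htc : dist L S < t * c)
    (d : EuclideanSpace ℝ (Fin 3)) (hd : ‖d‖ = 1)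
    (hdir : inner ℝ d (S - L) > -‖S - L‖) :
    ∃! s : ℝ, 0 < s ∧ dist L (L + s • d) + dist (L + s • d) S = t * c := by
  set T := t * c with hT
  set v : EuclideanSpace ℝ (Fin 3) := S - L with hv
  set a : ℝ := ‖v‖ with ha
  set p : ℝ := inner ℝ d v with hp
  have haT : a < T := by
    rw [ha, hv, ← dist_eq_norm, dist_comm]; exact htc
  have hpa : |p| ≤ a := by
    calc |p| ≤ ‖d‖ * ‖v‖ := abs_real_inner_le_norm d v
    _ = a := by rw [hd, one_mul]
  have hp2 : p ^ 2 ≤ a ^ 2 := by nlinarith [abs_nonneg p, sq_abs p]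
  have hTp : 0 < T - p := by
    have := le_abs_self p
    linarith
  have hnorm : ∀ s : ℝ, ‖s • d - v‖ ^ 2 = s ^ 2 - 2 * s * p + a ^ 2 := by
    intro s
    rw [norm_sub_sq_real, real_inner_smul_left, norm_smul, hd, Real.norm_eq_abs]
    rw [mul_one, sq_abs, ← hp, ← ha]
    ring
  have hdists : ∀ s : ℝ, 0 < s →
      dist L (L + s • d) + dist (L + s • d) S = s + ‖s • d - v‖ := by
    intro s hs
    have h1 : dist L (L + s • d) = s := by
      rw [dist_eq_norm]
      have : L - (L + s • d) = -(s • d) := by abel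
      rw [this, norm_neg, norm_smul, hd, mul_one, Real.norm_eq_abs, abs_of_pos hs]
    have h2 : L + s • d - S = s • d - v := by rw [hv]; abel
    rw [h1, dist_eq_norm, h2]
  set s₀ : ℝ := (T ^ 2 - a ^ 2) / (2 * (T - p)) with hs₀
  have hs₀eq : 2 * (T - p) * s₀ = T ^ 2 - a ^ 2 := by
    rw [hs₀]; field_simp
  have hanon : 0 ≤ a := norm_nonneg v
  have hs₀pos : 0 < s₀ := by
    apply div_pos <;> nlinarith
  have hs₀T : s₀ ≤ T := by
    rw [hs₀, div_le_iff₀ (by linarith)]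
    nlinarith
  have hsq : ‖s₀ • d - v‖ ^ 2 = (T - s₀) ^ 2 := by
    rw [hnorm]; nlinarith [hs₀eq]
  have hns₀ : ‖s₀ • d - v‖ = T - s₀ :=
    (sq_eq_sq₀ (norm_nonneg _) (by linarith)).mp hsq
  refine ⟨s₀, ⟨hs₀pos, ?_⟩, ?_⟩
  · rw [hdists s₀ hs₀pos, hns₀]; ring
  · rintro s ⟨hs, heq⟩
    rw [hdists s hs] at heq
    have hn : ‖s • d - v‖ = T - s := by linarith
    have hsq2 : s ^ 2 - 2 * s * p + a ^ 2 = (T - s) ^ 2 := by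
      have h := hnorm s
      rw [hn] at h
      linarith
    have : 2 * (T - p) * s = T ^ 2 - a ^ 2 := by linear_combination hsq2
    rw [hs₀, eq_div_iff (by linarith)]
    linarith [this]
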